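/- Let σ ≥ 1 be a real number. The following three conditions are equivalent: (i) limsup_{n→∞} ‖G_n‖^{1/n} ≤ σ; (ii) for every j = 0, …, μ−1, |θ_j| ≤ σ^{μ−j}; (iii) for every n ≥ 1, ‖G_n‖ ≤ σ^{n+μ−1}. -/

import Mathlib

open Finset in
theorem tk_upper' {F : Type*} [NormedField F] [IsUltrametricDist F]
    (dd : F → F)
    (hddnorm : ∀ f : F, ‖dd f‖ ≤ ‖f‖)
    (μ : ℕ) (hμ : 1 ≤ μ) (θ : Fin μ → F)
    (G1 : Matrix (Fin μ) (Fin μ) F)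
    (hG1 : ∀ i j : Fin μ, G1 i j =
      if (j : ℕ) = μ - 1 then θ i else if (i : ℕ) = (j : ℕ) + 1 then 1 else 0)
    (G : ℕ → Matrix (Fin μ) (Fin μ) F)
    (hGone : G 1 = G1)
    (hGsucc : ∀ n : ℕ, 1 ≤ n → G (n + 1) = G1 * G n + (G n).map dd)
    (s : ℝ) (hs : 1 ≤ s)
    (hθ : ∀ j : Fin μ, ‖θ j‖ ≤ s ^ (μ - (j : ℕ))) :
    ∀ n : ℕ, 1 ≤ n → ∀ i j : Fin μ, ‖G n i j‖ * s ^ (i : ℕ) ≤ s ^ (n + (j : ℕ)) := by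
  have hs0 : (0 : ℝ) < s := lt_of_lt_of_le one_pos hs
  intro n hn
  induction n, hn using Nat.le_induction with
  | base =>
    intro i j
    rw [hGone, hG1 i j]
    split_ifs with h1 h2
    · -- j = μ - 1 column
      calc ‖θ i‖ * s ^ (i : ℕ) ≤ s ^ (μ - (i : ℕ)) * s ^ (i : ℕ) :=
            mul_le_mul_of_nonneg_right (hθ i) (by positivity)
        _ = s ^ (μ - (i : ℕ) + (i : ℕ)) := (pow_add s _ _).symm
        _ = s ^ (1 + (j : ℕ)) := by
            congr 1
            have := i.isLt
            omega
    · simp only [norm_one, one_mul]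
      exact le_of_eq (by congr 1; omega)
    · simp only [norm_zero, zero_mul]
      positivity
  | succ n hn IH =>
    intro i j
    rw [hGsucc n hn]
    have hentry : (G1 * G n + (G n).map dd) i j
        = (∑ k : Fin μ, G1 i k * G n k j) + dd (G n i j) := by
      simp [Matrix.add_apply, Matrix.mul_apply, Matrix.map_apply]
    rw [hentry]
    have hmax := IsUltrametricDist.norm_add_le_max (∑ k : Fin μ, G1 i k * G n k j) (dd (G n i j))
    have hsum : ‖∑ k : Fin μ, G1 i k * G n k j‖ * s ^ (i : ℕ) ≤ s ^ (n + 1 + (j : ℕ)) := by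
      rw [← le_div_iff₀ (by positivity)]
      refine IsUltrametricDist.norm_sum_le_of_forall_le_of_nonneg (by positivity) ?_
      intro k _
      rw [le_div_iff₀ (by positivity), norm_mul]
      rw [hG1 i k]
      split_ifs with h1 h2
      · -- k = μ-1, θ i factor
        have IH' := IH k j
        calc ‖θ i‖ * ‖G n k j‖ * s ^ (i : ℕ)
            ≤ s ^ (μ - (i : ℕ)) * ‖G n k j‖ * s ^ (i : ℕ) := by
              have := norm_nonneg (G n k j)
              gcongr
              exact hθ i
          _ = (‖G n k j‖ * s ^ (k : ℕ)) * s := by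
              have hiμ : (μ - (i : ℕ)) + (i : ℕ) = μ := by have := i.isLt; omega
              have hpow : s ^ μ = s ^ ((k : ℕ)) * s := by
                rw [← pow_succ]; congr 1; omega
              rw [mul_right_comm, ← pow_add, hiμ, hpow]; ring
          _ ≤ s ^ (n + (j : ℕ)) * s := by
              have := IH k j
              gcongr
          _ = s ^ (n + 1 + (j : ℕ)) := by rw [← pow_succ]; congr 1; omega
      · -- subdiagonal
        have hik : (i : ℕ) = (k : ℕ) + 1 := h2
        calc ‖(1:F)‖ * ‖G n k j‖ * s ^ (i : ℕ) = (‖G n k j‖ * s ^ (k : ℕ)) * s := by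
              rw [norm_one, one_mul, hik, pow_succ]; ring
          _ ≤ s ^ (n + (j : ℕ)) * s := by
              have := IH k j
              gcongr
          _ = s ^ (n + 1 + (j : ℕ)) := by rw [← pow_succ]; congr 1; omega
      · simp only [norm_zero, zero_mul]
        positivity
    have hdd : ‖dd (G n i j)‖ * s ^ (i : ℕ) ≤ s ^ (n + 1 + (j : ℕ)) := by
      calc ‖dd (G n i j)‖ * s ^ (i : ℕ) ≤ ‖G n i j‖ * s ^ (i : ℕ) := by
            have := hddnorm (G n i j); gcongr
        _ ≤ s ^ (n + (j : ℕ)) := IH i j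
        _ ≤ s ^ (n + 1 + (j : ℕ)) := pow_le_pow_right₀ hs (by omega)
    calc ‖(∑ k : Fin μ, G1 i k * G n k j) + dd (G n i j)‖ * s ^ (i : ℕ)
        ≤ max ‖∑ k : Fin μ, G1 i k * G n k j‖ ‖dd (G n i j)‖ * s ^ (i : ℕ) := by gcongr
      _ = max (‖∑ k : Fin μ, G1 i k * G n k j‖ * s ^ (i : ℕ)) (‖dd (G n i j)‖ * s ^ (i : ℕ)) :=
          max_mul_of_nonneg _ _ (by positivity)
      _ ≤ s ^ (n + 1 + (j : ℕ)) := max_le hsum hdd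

theorem tk_apriori' {F : Type*} [NormedField F] [IsUltrametricDist F]
    (dd : F → F) (hddnorm : ∀ f : F, ‖dd f‖ ≤ ‖f‖)
    (μ : ℕ) (G1 : Matrix (Fin μ) (Fin μ) F)
    (G : ℕ → Matrix (Fin μ) (Fin μ) F)
    (hGone : G 1 = G1)
    (hGsucc : ∀ n : ℕ, 1 ≤ n → G (n + 1) = G1 * G n + (G n).map dd)
    (B : ℝ) (hB1 : 1 ≤ B) (hB : ∀ i j : Fin μ, ‖G1 i j‖ ≤ B) :
    ∀ n : ℕ, 1 ≤ n → ∀ i j : Fin μ, ‖G n i j‖ ≤ B ^ n := by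
  have hB0 : (0:ℝ) ≤ B := le_trans zero_le_one hB1
  intro n hn
  induction n, hn using Nat.le_induction with
  | base => intro i j; simpa [hGone] using hB i j
  | succ n hn IH =>
    intro i j
    rw [hGsucc n hn]
    have hentry : (G1 * G n + (G n).map dd) i j
        = (∑ k : Fin μ, G1 i k * G n k j) + dd (G n i j) := by
      simp [Matrix.add_apply, Matrix.mul_apply, Matrix.map_apply]
    rw [hentry]
    refine (IsUltrametricDist.norm_add_le_max _ _).trans (max_le ?_ ?_)
    · refine IsUltrametricDist.norm_sum_le_of_forall_le_of_nonneg (by positivity) ?_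
      intro k _
      rw [norm_mul, pow_succ, mul_comm (B ^ n) B]
      exact mul_le_mul (hB i k) (IH k j) (norm_nonneg _) hB0
    · calc ‖dd (G n i j)‖ ≤ ‖G n i j‖ := hddnorm _
        _ ≤ B ^ n := IH i j
        _ ≤ B ^ (n + 1) := pow_le_pow_right₀ hB1 (by omega)

open Finset Filter

theorem tk_sum_lt {F : Type*} [NormedField F] [IsUltrametricDist F] {ι : Type*} {s : Finset ι}
    (f : ι → F) {D : ℝ} (hD : 0 < D) (h : ∀ i ∈ s, ‖f i‖ < D) : ‖∑ i ∈ s, f i‖ < D := by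
  rcases s.eq_empty_or_nonempty with rfl | hs
  · simpa using hD
  · obtain ⟨i, hi, hle⟩ := IsUltrametricDist.exists_norm_finset_sum_le_of_nonempty hs f
    exact hle.trans_lt (h i hi)

set_option maxHeartbeats 2000000 in
theorem tk_core' {F : Type*} [NormedField F] [IsUltrametricDist F]
    (dd : F → F)
    (hddnorm : ∀ f : F, ‖dd f‖ ≤ ‖f‖)
    (hdd0 : dd 0 = 0) (hdd1 : dd 1 = 0)
    (μ : ℕ) (hμ : 1 ≤ μ) (θ' : ℕ → F) (a' : ℕ → ℕ → F)
    (ha0 : ∀ i, a' 0 i = if i = 0 then 1 else 0)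
    (hshift : ∀ n i, i < μ →
      a' (n+1) i = (if 1 ≤ i then a' n (i-1) else 0) + θ' i * a' n (μ-1) + dd (a' n i))
    (C τ r : ℝ) (hC : 1 ≤ C) (hτ : 1 < τ) (hr0 : 0 < r) (hrτ : r * τ < 1)
    (hbound : ∀ n i, ‖a' n i‖ ≤ C * τ ^ n)
    (j0 : ℕ) (hj0 : j0 < μ) (hbig : 1 < ‖θ' j0‖ * r ^ (μ - j0)) : False := by
  have hr1 : r < 1 := by nlinarith
  set b : ℕ → F := fun n => a' n (μ - 1) with hb_def
  -- initial segment
  have hinit : ∀ m, m ≤ μ - 1 → ∀ i, i < μ → a' m i = if i = m then 1 else 0 := by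
    intro m
    induction m with
    | zero => intro _ i _; simp [ha0]
    | succ m IH =>
      intro hm i hi
      have hm' : m ≤ μ - 1 := by omega
      rw [hshift m i hi]
      have hbm : a' m (μ - 1) = 0 := by
        rw [IH hm' (μ-1) (by omega)]
        simp only [ite_eq_right_iff]
        intro h; omega
      have hddm : dd (a' m i) = 0 := by
        rw [IH hm' i hi]
        split_ifs <;> simp [hdd0, hdd1]
      rw [hbm, hddm, mul_zero, add_zero, add_zero]
      by_cases h1 : 1 ≤ i
      · rw [if_pos h1, IH hm' (i-1) (by omega)]
        split_ifs with h2 h3 h3 <;> first | rfl | omega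
      · rw [if_neg h1]
        split_ifs with h2
        · omega
        · rfl
  have hbμ : b (μ - 1) = 1 := by
    rw [hb_def]; simp only []
    rw [hinit (μ-1) le_rfl (μ-1) (by omega), if_pos rfl]
  -- KEY' identity
  have KEY : ∀ n, ∀ i, i < μ → a' n i =
      (∑ k ∈ Finset.range (min n (i+1)),
        (θ' (i - k) * b (n - 1 - k) + dd (a' (n - 1 - k) (i - k))))
      + (if n = i then 1 else 0) := by
    intro n
    induction n with
    | zero =>
      intro i _
      simp only [Nat.zero_sub, min_eq_left (Nat.zero_le _), Finset.range_zero,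
        Finset.sum_empty, zero_add, ha0]
      congr 1
      simp [eq_comm]
    | succ n IH =>
      intro i hi
      rw [hshift n i hi]
      by_cases h1 : 1 ≤ i
      · have hi' : i - 1 < μ := by omega
        have IH' := IH (i-1) hi'
        have hmin : min (n+1) (i+1) = min n (i-1+1) + 1 := by omega
        rw [hmin]
        rw [Finset.sum_range_succ']
        have hsummand : ∀ k ∈ Finset.range (min n (i-1+1)),
            (θ' (i - (k+1)) * b (n + 1 - 1 - (k+1)) + dd (a' (n + 1 - 1 - (k+1)) (i - (k+1))))
            = (θ' (i - 1 - k) * b (n - 1 - k) + dd (a' (n - 1 - k) (i - 1 - k))) := by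
          intro k _
          have e1 : i - (k+1) = i - 1 - k := by omega
          have e2 : n + 1 - 1 - (k+1) = n - 1 - k := by omega
          rw [e1, e2]
        rw [Finset.sum_congr rfl hsummand]
        have e3 : i - 0 = i := by omega
        have e4 : n + 1 - 1 - 0 = n := by omega
        have e5 : (if n + 1 = i then (1:F) else 0) = (if n = i - 1 then 1 else 0) := by
          split_ifs with u v <;> first | rfl | omega
        rw [e3, e4, e5, if_pos h1, IH']
        simp only [hb_def]
        ring
      · have hi0 : i = 0 := by omega
        subst hi0
        have hmin : min (n+1) (0+1) = 1 := by omega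
        rw [hmin]
        rw [if_neg h1]
        have e5 : (if n + 1 = 0 then (1:F) else 0) = 0 := by rw [if_neg (by omega)]
        rw [e5]
        simp only [Finset.sum_range_one, Nat.sub_zero, Nat.add_sub_cancel]
        ring
  -- q coefficients
  set q' : ℕ → F := fun m => if m = 0 then 1 else if m ≤ μ then -θ' (μ - m) else 0 with hq_def
  set wB : ℕ → ℝ := fun n => ‖b n‖ * r ^ n with hwB_def
  have hrτ0 : (0:ℝ) ≤ r * τ := by positivity
  have hwB_nonneg : ∀ n, 0 ≤ wB n := by
    intro n; rw [hwB_def]; positivity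
  have hwB_le : ∀ n, wB n ≤ C * (r*τ)^n := by
    intro n
    rw [hwB_def]
    simp only []
    calc ‖b n‖ * r ^ n ≤ (C * τ ^ n) * r ^ n := by
          have := hbound n (μ-1); gcongr
      _ = C * (r*τ)^n := by rw [mul_pow]; ring
  have htend : Filter.Tendsto wB Filter.atTop (nhds 0) := by
    refine squeeze_zero hwB_nonneg hwB_le ?_
    have h := (tendsto_pow_atTop_nhds_zero_of_lt_one hrτ0 hrτ).const_mul C
    simpa using h
  have hBdd : ∀ i : ℕ, BddAbove (Set.range fun n => ‖a' n i‖ * r ^ n) := by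
    intro i
    refine ⟨C, ?_⟩
    rintro x ⟨n, rfl⟩
    calc ‖a' n i‖ * r ^ n ≤ (C * τ ^ n) * r ^ n := by
          have := hbound n i; gcongr
      _ = C * (r*τ)^n := by rw [mul_pow]; ring
      _ ≤ C * 1 := by
          have : (r*τ)^n ≤ 1 := pow_le_one₀ hrτ0 hrτ.le
          nlinarith
      _ = C := mul_one C
  set W : ℕ → ℝ := fun i => ⨆ n, ‖a' n i‖ * r ^ n with hW_def
  have hWle : ∀ i n, ‖a' n i‖ * r ^ n ≤ W i := fun i n => le_ciSup (hBdd i) n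
  have hW0 : ∀ i, 0 ≤ W i := fun i => le_trans (by positivity) (hWle i 0)
  set Wg := W (μ - 1) with hWg_def
  have hwBW : ∀ n, wB n ≤ Wg := by
    intro n
    rw [hwB_def, hWg_def]
    exact hWle (μ-1) n
  have hWgr : r ^ (μ-1) ≤ Wg := by
    have h := hwBW (μ-1)
    rw [hwB_def] at h
    simp only [hbμ, norm_one, one_mul] at h
    exact h
  have hWg_pos : 0 < Wg := lt_of_lt_of_le (by positivity) hWgr
  -- WQ
  have hQS : (Finset.range (μ+1)).Nonempty := ⟨0, by simp⟩
  set wQ : ℕ → ℝ := fun m => ‖q' m‖ * r ^ m with hwQ_def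
  set WQ := (Finset.range (μ+1)).sup' hQS wQ with hWQ_def
  have hqbig : ∀ m, μ < m → q' m = 0 := by
    intro m hm
    rw [hq_def]
    simp only []
    rw [if_neg (by omega), if_neg (by omega)]
  have hwQ_le : ∀ m, wQ m ≤ WQ := by
    intro m
    by_cases hm : m ≤ μ
    · exact Finset.le_sup' wQ (Finset.mem_range.2 (by omega))
    · have h0 : wQ m = 0 := by rw [hwQ_def]; simp [hqbig m (by omega)]
      rw [h0]
      refine le_trans ?_ (Finset.le_sup' wQ (Finset.mem_range.2 (show 0 < μ+1 by omega)))
      rw [hwQ_def]; positivity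
  have hq0 : q' 0 = 1 := by rw [hq_def]; simp
  have hqθ : ∀ i, i < μ → q' (μ - i) = -θ' i := by
    intro i hi
    rw [hq_def]
    simp only []
    rw [if_neg (by omega), if_pos (by omega)]
    congr 2
    omega
  have hWQ1 : 1 < WQ := by
    refine lt_of_lt_of_le hbig (le_trans (le_of_eq ?_) (hwQ_le (μ - j0)))
    rw [hwQ_def]
    simp only [hqθ j0 hj0, norm_neg]
  have hWQ_pos : 0 < WQ := lt_trans one_pos hWQ1
  have hV_pos : 0 < WQ * Wg := mul_pos hWQ_pos hWg_pos
  -- attainment: Q side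
  set SQ := (Finset.range (μ+1)).filter (fun m => wQ m = WQ) with hSQ_def
  have hSQne : SQ.Nonempty := by
    obtain ⟨m, hm, hmeq⟩ := Finset.exists_mem_eq_sup' hQS wQ
    exact ⟨m, Finset.mem_filter.2 ⟨hm, hmeq.symm⟩⟩
  set m1 := SQ.max' hSQne with hm1_def
  have hm1mem := SQ.max'_mem hSQne
  have hm1q : wQ m1 = WQ := (Finset.mem_filter.1 hm1mem).2
  have hm1le : m1 ≤ μ := by
    have := (Finset.mem_filter.1 hm1mem).1
    rw [Finset.mem_range] at this
    omega
  have hm1max : ∀ m, m1 < m → wQ m < WQ := by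
    intro m hm
    rcases le_or_gt m μ with h | h
    · refine lt_of_le_of_ne (hwQ_le m) ?_
      intro heq
      have hmem : m ∈ SQ := Finset.mem_filter.2 ⟨Finset.mem_range.2 (by omega), heq⟩
      have := Finset.le_max' SQ m hmem
      omega
    · have h0 : wQ m = 0 := by rw [hwQ_def]; simp [hqbig m h]
      rw [h0]; exact hWQ_pos
  -- attainment: b side
  obtain ⟨N', hN'⟩ : ∃ N', ∀ n, N' ≤ n → wB n < Wg / 2 := by
    have h := htend.eventually_lt_const (show (0:ℝ) < Wg/2 by linarith)
    exact Filter.eventually_atTop.1 h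
  have hRBne : (Finset.range (N'+1)).Nonempty := ⟨0, by simp⟩
  set M' := (Finset.range (N'+1)).sup' hRBne wB with hM'_def
  have hWgM : Wg ≤ max M' (Wg/2) := by
    have : Wg = ⨆ n, wB n := by
      rw [hWg_def, hW_def, hwB_def, hb_def]
    rw [this]
    refine ciSup_le ?_
    intro n
    rcases le_or_gt n N' with h | h
    · exact le_max_of_le_left (Finset.le_sup' wB (Finset.mem_range.2 (by omega)))
    · exact le_max_of_le_right (hN' n (by omega)).le
  have hWgM' : Wg ≤ M' := by
    rcases le_max_iff.1 hWgM with h | h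
    · exact h
    · linarith
  have hM'eq : M' = Wg := le_antisymm (Finset.sup'_le _ _ (fun n _ => hwBW n)) hWgM'
  obtain ⟨nb, hnbmem, hnbeq⟩ := Finset.exists_mem_eq_sup' hRBne wB
  set SB := (Finset.range (N'+1)).filter (fun n => wB n = Wg) with hSB_def
  have hSBne : SB.Nonempty := ⟨nb, Finset.mem_filter.2 ⟨hnbmem, by rw [← hnbeq, ← hM'_def, hM'eq]⟩⟩
  set n1 := SB.max' hSBne with hn1_def
  have hn1mem := SB.max'_mem hSBne
  have hn1q : wB n1 = Wg := (Finset.mem_filter.1 hn1mem).2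
  have hn1max : ∀ m, n1 < m → wB m < Wg := by
    intro m hm
    rcases le_or_gt m N' with h | h
    · refine lt_of_le_of_ne (hwBW m) ?_
      intro heq
      have hmem : m ∈ SB := Finset.mem_filter.2 ⟨Finset.mem_range.2 (by omega), heq⟩
      have := Finset.le_max' SB m hmem
      omega
    · exact (hN' m (by omega)).trans (by linarith)
  have hwQ0 : ∀ m, 0 ≤ wQ m := by intro m; rw [hwQ_def]; positivity
  -- product coefficient at N1
  set N1 := n1 + m1 with hN1_def
  set c := ∑ k ∈ Finset.range (N1+1), q' k * b (N1 - k) with hc_def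
  have hm1N1 : m1 ∈ Finset.range (N1+1) := Finset.mem_range.2 (by omega)
  have hrN1 : (0:ℝ) < r ^ N1 := by positivity
  have hmain : ‖q' m1 * b n1‖ * r ^ N1 = WQ * Wg := by
    rw [norm_mul, ← hm1q, ← hn1q, hwQ_def, hwB_def]
    simp only []
    rw [hN1_def, pow_add]
    ring
  have hrest : ‖c - q' m1 * b n1‖ * r ^ N1 < WQ * Wg := by
    have hn1e : N1 - m1 = n1 := by omega
    have hsplit : c - q' m1 * b n1
        = ∑ k ∈ (Finset.range (N1+1)).erase m1, q' k * b (N1 - k) := by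
      have h := Finset.sum_erase_add (Finset.range (N1+1)) (fun k => q' k * b (N1-k)) hm1N1
      rw [hc_def, ← h]
      simp only [hn1e]
      ring
    rw [hsplit, ← lt_div_iff₀ hrN1]
    refine tk_sum_lt _ (by positivity) ?_
    intro k hk
    have hkne := Finset.ne_of_mem_erase hk
    have hkmem := Finset.mem_of_mem_erase hk
    rw [Finset.mem_range] at hkmem
    have hkN1 : k ≤ N1 := by omega
    rw [lt_div_iff₀ hrN1, norm_mul]
    have hexp : r ^ N1 = r ^ k * r ^ (N1 - k) := by rw [← pow_add]; congr 1; omega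
    rw [hexp]
    have hterm : ‖q' k‖ * ‖b (N1-k)‖ * (r^k * r^(N1-k)) = wQ k * wB (N1-k) := by
      rw [hwQ_def, hwB_def]; ring
    rw [hterm]
    rcases lt_or_gt_of_ne hkne with h | h
    · have hgt : n1 < N1 - k := by omega
      calc wQ k * wB (N1-k) ≤ WQ * wB (N1-k) :=
            mul_le_mul_of_nonneg_right (hwQ_le k) (hwB_nonneg _)
        _ < WQ * Wg := mul_lt_mul_of_pos_left (hn1max _ hgt) hWQ_pos
    · calc wQ k * wB (N1-k) ≤ wQ k * Wg :=
            mul_le_mul_of_nonneg_left (hwBW _) (hwQ0 k)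
        _ < WQ * Wg := mul_lt_mul_of_pos_right (hm1max k h) hWg_pos
  have hc_norm : ‖c‖ * r ^ N1 = WQ * Wg := by
    have hmain' : ‖q' m1 * b n1‖ = WQ * Wg / r^N1 := by
      rw [eq_div_iff hrN1.ne']; exact hmain
    have hlt : ‖c - q' m1 * b n1‖ < ‖q' m1 * b n1‖ := by
      rw [hmain', lt_div_iff₀ hrN1]
      exact hrest
    have hcsplit : c = q' m1 * b n1 + (c - q' m1 * b n1) := by ring
    rw [hcsplit, IsUltrametricDist.norm_add_eq_max_of_norm_ne_norm hlt.ne', max_eq_left hlt.le]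
    exact hmain
  -- KEY expansion of c
  have hcdd : c = (∑ k ∈ Finset.range (min N1 μ), dd (a' (N1 - 1 - k) (μ - 1 - k)))
      + (if N1 = μ - 1 then 1 else 0) := by
    have hKk := KEY N1 (μ-1) (by omega)
    have hμ1 : μ - 1 + 1 = μ := by omega
    rw [hμ1] at hKk
    rw [hc_def, Finset.sum_range_succ']
    have hq0t : q' 0 * b (N1 - 0) = b N1 := by
      rw [hq0, one_mul, Nat.sub_zero]
    have hsub1 : ∑ k ∈ Finset.range N1, q' (k+1) * b (N1 - (k+1))
        = ∑ k ∈ Finset.range (min N1 μ), q' (k+1) * b (N1 - (k+1)) := by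
      refine (Finset.sum_subset (Finset.range_subset_range.2 (min_le_left N1 μ)) ?_).symm
      intro k hk1 hk2
      rw [Finset.mem_range] at hk1
      rw [Finset.mem_range] at hk2
      have : μ < k + 1 := by omega
      rw [hqbig _ this, zero_mul]
    have hsub2 : ∑ k ∈ Finset.range (min N1 μ), q' (k+1) * b (N1 - (k+1))
        = ∑ k ∈ Finset.range (min N1 μ), -(θ' (μ-1-k) * b (N1-1-k)) := by
      refine Finset.sum_congr rfl ?_
      intro k hk
      rw [Finset.mem_range] at hk
      have hk1 : k + 1 ≤ μ := by omega
      have hqv : q' (k+1) = -θ' (μ-1-k) := by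
        rw [hq_def]
        simp only []
        rw [if_neg (by omega), if_pos hk1]
        congr 2
        omega
      rw [hqv]
      have : N1 - (k+1) = N1 - 1 - k := by omega
      rw [this]
      ring
    have hKk' : b N1 = ∑ k ∈ Finset.range (min N1 μ),
        (θ' (μ - 1 - k) * b (N1 - 1 - k) + dd (a' (N1 - 1 - k) (μ - 1 - k)))
        + (if N1 = μ - 1 then 1 else 0) := hKk
    rw [hq0t, hsub1, hsub2, hKk', Finset.sum_add_distrib, Finset.sum_neg_distrib]
    ring
  -- W recursion and absorption
  have hWi : ∀ i, i < μ → W i ≤ max (if i = 0 then 1 else r * W (i-1)) (‖θ' i‖ * r * Wg) := by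
    intro i hi
    have hT0 : (0:ℝ) ≤ max (if i = 0 then 1 else r * W (i-1)) (‖θ' i‖ * r * Wg) := by
      refine le_trans ?_ (le_max_left _ _)
      split_ifs
      · exact zero_le_one
      · have := hW0 (i-1); positivity
    have hstep : W i ≤ max (max (if i = 0 then 1 else r * W (i-1)) (‖θ' i‖ * r * Wg)) (r * W i) := by
      refine ciSup_le ?_
      intro n
      cases n with
      | zero =>
        rw [ha0 i, pow_zero, mul_one]
        split_ifs with h
        · rw [norm_one]
          exact le_max_of_le_left (le_max_left _ _)
        · rw [norm_zero]
          exact le_max_of_le_right (by have := hW0 i; positivity)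
      | succ n =>
        rw [hshift n i hi]
        have hnorm3 : ‖(if 1 ≤ i then a' n (i-1) else 0) + θ' i * a' n (μ-1) + dd (a' n i)‖
            ≤ max (max ‖(if 1 ≤ i then a' n (i-1) else 0)‖ ‖θ' i * a' n (μ-1)‖) ‖dd (a' n i)‖ :=
          le_trans (IsUltrametricDist.norm_add_le_max _ _)
            (max_le_max (IsUltrametricDist.norm_add_le_max _ _) le_rfl)
        refine le_trans (mul_le_mul_of_nonneg_right hnorm3 (by positivity)) ?_
        rw [max_mul_of_nonneg _ _ (by positivity : (0:ℝ) ≤ r^(n+1)),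
            max_mul_of_nonneg _ _ (by positivity : (0:ℝ) ≤ r^(n+1))]
        refine max_le_max (max_le_max ?_ ?_) ?_
        · by_cases h : 1 ≤ i
          · rw [if_pos h, if_neg (by omega)]
            calc ‖a' n (i-1)‖ * r^(n+1) = (‖a' n (i-1)‖ * r^n) * r := by rw [pow_succ]; ring
              _ ≤ W (i-1) * r := mul_le_mul_of_nonneg_right (hWle _ n) hr0.le
              _ = r * W (i-1) := mul_comm _ _
          · rw [if_neg h, if_pos (by omega), norm_zero, zero_mul]
            exact zero_le_one
        · rw [norm_mul]
          calc ‖θ' i‖ * ‖a' n (μ-1)‖ * r^(n+1)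
              = (‖θ' i‖ * r) * (‖a' n (μ-1)‖ * r^n) := by rw [pow_succ]; ring
            _ ≤ (‖θ' i‖ * r) * Wg := by
                have := hWle (μ-1) n
                have h0 : (0:ℝ) ≤ ‖θ' i‖ * r := by positivity
                rw [hWg_def]
                exact mul_le_mul_of_nonneg_left this h0
            _ = ‖θ' i‖ * r * Wg := rfl
        · calc ‖dd (a' n i)‖ * r^(n+1) ≤ ‖a' n i‖ * r^(n+1) :=
              mul_le_mul_of_nonneg_right (hddnorm _) (by positivity)
            _ = (‖a' n i‖ * r^n) * r := by rw [pow_succ]; ring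
            _ ≤ W i * r := mul_le_mul_of_nonneg_right (hWle _ n) hr0.le
            _ = r * W i := mul_comm _ _
    rcases le_max_iff.1 hstep with h' | h'
    · exact h'
    · have : W i ≤ 0 := by nlinarith [hW0 i]
      exact le_trans this hT0
  -- theta coefficient bound
  have hθW : ∀ i, i < μ → ‖θ' i‖ * r * Wg ≤ WQ * Wg * r^(i+1) / r^μ := by
    intro i hi
    rw [le_div_iff₀ (by positivity : (0:ℝ) < r^μ)]
    have hwq : ‖θ' i‖ * r^(μ-i) = wQ (μ-i) := by
      rw [hwQ_def]
      simp only [hqθ i hi, norm_neg]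
    have e : r * r^μ = r^(μ-i) * r^(i+1) := by
      rw [← pow_succ', ← pow_add]
      congr 1
      omega
    calc ‖θ' i‖ * r * Wg * r^μ = (‖θ' i‖ * r^(μ-i)) * (Wg * r^(i+1)) := by
          linear_combination (‖θ' i‖ * Wg) * e
      _ = wQ (μ-i) * (Wg * r^(i+1)) := by rw [hwq]
      _ ≤ WQ * (Wg * r^(i+1)) := by
          have h0 : (0:ℝ) ≤ Wg * r^(i+1) := by positivity
          exact mul_le_mul_of_nonneg_right (hwQ_le _) h0
      _ = WQ * Wg * r^(i+1) := by ring
  -- chain bound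
  have hCh : ∀ i, i < μ → W i ≤ max (r^i) (WQ * Wg * r^(i+1) / r^μ) := by
    intro i
    induction i with
    | zero =>
      intro h0
      have h := hWi 0 h0
      rw [if_pos rfl] at h
      refine h.trans (max_le_max (by rw [pow_zero]) (hθW 0 h0))
    | succ i IHc =>
      intro hi
      have h := hWi (i+1) hi
      rw [if_neg (by omega)] at h
      refine h.trans (max_le ?_ ((hθW (i+1) hi).trans (le_max_right _ _)))
      have hWi1 := IHc (by omega)
      have e0 : (i + 1 : ℕ) - 1 = i := by omega
      rw [e0]
      calc r * W i ≤ r * max (r^i) (WQ*Wg*r^(i+1)/r^μ) :=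
            mul_le_mul_of_nonneg_left hWi1 hr0.le
        _ = max (r * r^i) (r * (WQ*Wg*r^(i+1)/r^μ)) := mul_max_of_nonneg _ _ hr0.le
        _ ≤ max (r^(i+1)) (WQ*Wg*r^(i+1+1)/r^μ) := by
            refine max_le_max (le_of_eq (pow_succ' r i).symm) (le_of_eq ?_)
            field_simp
            ring
  -- final bound on each dd term
  have hterm : ∀ k, k < min N1 μ → W (μ-1-k) * r^(k+1) ≤ max (r^μ) (r * (WQ*Wg)) := by
    intro k hk
    have hkμ : k < μ := lt_of_lt_of_le hk (min_le_right _ _)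
    have hk1 : μ-1-k < μ := by omega
    have h := hCh (μ-1-k) hk1
    have e1 : μ-1-k+1 = μ-k := by omega
    rw [e1] at h
    calc W (μ-1-k) * r^(k+1) ≤ max (r^(μ-1-k)) (WQ*Wg*r^(μ-k)/r^μ) * r^(k+1) :=
          mul_le_mul_of_nonneg_right h (by positivity)
      _ = max (r^(μ-1-k) * r^(k+1)) (WQ*Wg*r^(μ-k)/r^μ * r^(k+1)) :=
          max_mul_of_nonneg _ _ (by positivity)
      _ ≤ max (r^μ) (r * (WQ*Wg)) := by
          refine max_le_max (le_of_eq ?_) (le_of_eq ?_)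
          · rw [← pow_add]; congr 1; omega
          · have e2 : r^(μ-k) * r^(k+1) = r^μ * r := by
              rw [← pow_add, ← pow_succ]; congr 1; omega
            field_simp
            linear_combination e2
  -- final contradiction
  have hfinal : WQ * Wg ≤ max (max (r^μ) (r * (WQ*Wg))) (r^(μ-1)) := by
    have h0 : ‖(∑ k ∈ Finset.range (min N1 μ), dd (a' (N1 - 1 - k) (μ - 1 - k)))
        + (if N1 = μ - 1 then (1:F) else 0)‖ * r ^ N1 = WQ * Wg := by
      rw [← hcdd]; exact hc_norm
    refine le_trans (le_of_eq h0.symm) ?_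
    refine le_trans (mul_le_mul_of_nonneg_right (IsUltrametricDist.norm_add_le_max _ _)
      (by positivity)) ?_
    rw [max_mul_of_nonneg _ _ (by positivity : (0:ℝ) ≤ r^N1)]
    refine max_le_max ?_ ?_
    · rw [← le_div_iff₀ hrN1]
      refine IsUltrametricDist.norm_sum_le_of_forall_le_of_nonneg (by positivity) ?_
      intro k hk
      rw [Finset.mem_range] at hk
      rw [le_div_iff₀ hrN1]
      have hkN : k < N1 := lt_of_lt_of_le hk (min_le_left _ _)
      have e3 : r ^ N1 = r^(N1-1-k) * r^(k+1) := by
        rw [← pow_add]; congr 1; omega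
      calc ‖dd (a' (N1-1-k) (μ-1-k))‖ * r^N1 ≤ ‖a' (N1-1-k) (μ-1-k)‖ * r^N1 :=
            mul_le_mul_of_nonneg_right (hddnorm _) (by positivity)
        _ = (‖a' (N1-1-k) (μ-1-k)‖ * r^(N1-1-k)) * r^(k+1) := by rw [e3]; ring
        _ ≤ W (μ-1-k) * r^(k+1) := mul_le_mul_of_nonneg_right (hWle _ _) (by positivity)
        _ ≤ max (r^μ) (r * (WQ*Wg)) := hterm k hk
    · split_ifs with h
      · rw [norm_one, one_mul, h]
      · rw [norm_zero, zero_mul]; positivity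
  have hlt1 : r^(μ-1) < WQ * Wg := by
    have h1 : WQ * r^(μ-1) ≤ WQ * Wg := mul_le_mul_of_nonneg_left hWgr hWQ_pos.le
    have h2 : (0:ℝ) < r^(μ-1) := by positivity
    nlinarith
  have hlt2 : r^μ < WQ * Wg := by
    refine lt_of_le_of_lt ?_ hlt1
    exact pow_le_pow_of_le_one hr0.le hr1.le (by omega)
  have hlt3 : r * (WQ*Wg) < WQ * Wg := by nlinarith
  have : max (max (r^μ) (r * (WQ*Wg))) (r^(μ-1)) < WQ * Wg := max_lt (max_lt hlt2 hlt3) hlt1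
  exact absurd hfinal (not_le.2 this)

set_option maxHeartbeats 1000000 in
/-- Turrittin–Katz: equivalence of spectral bound, coefficient bounds, and bounds on the
matrices of all powers of the differential operator in a cyclic basis. -/
theorem stmt_0 {F : Type*} [NormedField F] [IsUltrametricDist F] [CompleteSpace F]
    (dd : F → F)
    (hddadd : ∀ f g : F, dd (f + g) = dd f + dd g)
    (hddmul : ∀ f g : F, dd (f * g) = f * dd g + g * dd f)
    (hddnorm : ∀ f : F, ‖dd f‖ ≤ ‖f‖)
    (μ : ℕ) (hμ : 1 ≤ μ) (θ : Fin μ → F)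
    (G1 : Matrix (Fin μ) (Fin μ) F)
    (hG1 : ∀ i j : Fin μ, G1 i j =
      if (j : ℕ) = μ - 1 then θ i else if (i : ℕ) = (j : ℕ) + 1 then 1 else 0)
    (G : ℕ → Matrix (Fin μ) (Fin μ) F)
    (hGone : G 1 = G1)
    (hGsucc : ∀ n : ℕ, 1 ≤ n → G (n + 1) = G1 * G n + (G n).map dd)
    (σ : ℝ) (hσ : 1 ≤ σ) :
    List.TFAE
      [Filter.limsup (fun n : ℕ => (⨆ p : Fin μ × Fin μ, ‖G n p.1 p.2‖) ^ ((n : ℝ)⁻¹))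
          Filter.atTop ≤ σ,
       ∀ j : Fin μ, ‖θ j‖ ≤ σ ^ (μ - (j : ℕ)),
       ∀ n : ℕ, 1 ≤ n → (⨆ p : Fin μ × Fin μ, ‖G n p.1 p.2‖) ≤ σ ^ (n + μ - 1)] := by
  classical
  have hμpos : 0 < μ := hμ
  haveI : Nonempty (Fin μ × Fin μ) := ⟨(⟨0, hμpos⟩, ⟨0, hμpos⟩)⟩
  set nrm : ℕ → ℝ := fun n => ⨆ p : Fin μ × Fin μ, ‖G n p.1 p.2‖ with hnrm_def
  have hnrm0 : ∀ n, 0 ≤ nrm n := fun n => Real.iSup_nonneg fun p => norm_nonneg _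
  have hnrm_ge : ∀ (n : ℕ) (i j : Fin μ), ‖G n i j‖ ≤ nrm n := by
    intro n i j
    exact le_ciSup (f := fun p : Fin μ × Fin μ => ‖G n p.1 p.2‖)
      (Set.Finite.bddAbove (Set.finite_range _)) (i, j)
  have hσ0 : (0:ℝ) < σ := lt_of_lt_of_le one_pos hσ
  have hdd0 : dd 0 = 0 := by
    have h := hddadd 0 0
    rw [add_zero] at h
    exact (left_eq_add.mp h)
  have hdd1 : dd 1 = 0 := by
    have h := hddmul 1 1
    simp only [mul_one, one_mul] at h
    exact (left_eq_add.mp h)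
  tfae_have 2 → 3 := by
    intro h2 n hn
    refine ciSup_le fun p => ?_
    have hu := tk_upper' dd hddnorm μ hμ θ G1 hG1 G hGone hGsucc σ hσ h2 n hn p.1 p.2
    have h1 : ‖G n p.1 p.2‖ ≤ ‖G n p.1 p.2‖ * σ ^ ((p.1 : ℕ)) :=
      le_mul_of_one_le_right (norm_nonneg _) (one_le_pow₀ hσ)
    refine h1.trans (hu.trans ?_)
    exact pow_le_pow_right₀ hσ (by have := p.2.isLt; omega)
  tfae_have 3 → 1 := by
    intro h3
    have hfg : ∀ᶠ n in Filter.atTop, nrm n ^ ((n:ℝ)⁻¹)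
        ≤ σ ^ (((n + μ - 1 : ℕ) : ℝ) * (n:ℝ)⁻¹) := by
      refine Filter.eventually_atTop.2 ⟨1, fun n hn => ?_⟩
      have h := h3 n hn
      have hle : nrm n ^ ((n:ℝ)⁻¹) ≤ (σ ^ (n + μ - 1)) ^ ((n:ℝ)⁻¹) :=
        Real.rpow_le_rpow (hnrm0 n) h (by positivity)
      refine hle.trans (le_of_eq ?_)
      rw [← Real.rpow_natCast σ (n + μ - 1), ← Real.rpow_mul hσ0.le]
    have he : Filter.Tendsto (fun n : ℕ => ((n + μ - 1 : ℕ) : ℝ) * (n:ℝ)⁻¹)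
        Filter.atTop (nhds 1) := by
      have h1 : ∀ᶠ n : ℕ in Filter.atTop,
          (1 : ℝ) + ((μ - 1 : ℕ) : ℝ) / n = ((n + μ - 1 : ℕ) : ℝ) * (n:ℝ)⁻¹ := by
        refine Filter.eventually_atTop.2 ⟨1, fun n hn => ?_⟩
        have hn0 : (n:ℝ) ≠ 0 := Nat.cast_ne_zero.2 (by omega)
        have hc : ((n + μ - 1 : ℕ) : ℝ) = (n : ℝ) + ((μ-1 : ℕ) : ℝ) := by
          rw [show n + μ - 1 = n + (μ-1) from by omega]
          push_cast
          ring
        rw [hc]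
        field_simp
      have h2 : Filter.Tendsto (fun n : ℕ => (1:ℝ) + ((μ - 1:ℕ):ℝ)/n)
          Filter.atTop (nhds (1+0)) :=
        tendsto_const_nhds.add (tendsto_const_div_atTop_nhds_zero_nat _)
      rw [add_zero] at h2
      exact h2.congr' h1
    have htg : Filter.Tendsto (fun n : ℕ => σ ^ (((n + μ - 1 : ℕ) : ℝ) * (n:ℝ)⁻¹))
        Filter.atTop (nhds σ) := by
      have hcont : ContinuousAt (fun x : ℝ => σ ^ x) 1 :=
        Real.continuousAt_const_rpow hσ0.ne'
      have := hcont.tendsto.comp he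
      simpa [Real.rpow_one, Function.comp_def] using this
    have hbddg : Filter.IsBoundedUnder (· ≤ ·) Filter.atTop
        (fun n : ℕ => σ ^ (((n + μ - 1 : ℕ) : ℝ) * (n:ℝ)⁻¹)) := htg.isBoundedUnder_le
    have hcob : Filter.IsCoboundedUnder (· ≤ ·) Filter.atTop
        (fun n : ℕ => nrm n ^ ((n:ℝ)⁻¹)) := by
      refine Filter.IsBoundedUnder.isCoboundedUnder_le ?_
      exact Filter.isBoundedUnder_of ⟨0, fun n => Real.rpow_nonneg (hnrm0 n) _⟩
    calc Filter.limsup (fun n : ℕ => nrm n ^ ((n:ℝ)⁻¹)) Filter.atTop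
        ≤ Filter.limsup (fun n : ℕ => σ ^ (((n + μ - 1 : ℕ) : ℝ) * (n:ℝ)⁻¹)) Filter.atTop :=
          Filter.limsup_le_limsup hfg hcob hbddg
      _ = σ := htg.limsup_eq
  tfae_have 1 → 2 := by
    intro h1 j
    by_contra hcon
    push_neg at hcon
    set d := μ - (j:ℕ) with hd_def
    have hd1 : 1 ≤ d := by have := j.isLt; omega
    obtain ⟨r, hr0, hrσ, hrbig⟩ : ∃ r : ℝ, 0 < r ∧ r < 1/σ ∧ 1 < ‖θ j‖ * r ^ d := by
      have hcontg : ContinuousAt (fun x : ℝ => ‖θ j‖ * x ^ d) (1/σ) := by fun_prop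
      have hval : 1 < ‖θ j‖ * (1/σ) ^ d := by
        rw [one_div, inv_pow, mul_comm, inv_mul_eq_div, lt_div_iff₀ (by positivity)]
        simpa using hcon
      have hev1 : ∀ᶠ x in nhds (1/σ), 1 < ‖θ j‖ * x ^ d :=
        hcontg.tendsto.eventually (eventually_gt_nhds hval)
      have hev2 : ∀ᶠ x in nhds (1/σ), 0 < x := eventually_gt_nhds (by positivity)
      have h3 := ((hev1.and hev2).filter_mono (nhdsWithin_le_nhds (s := Set.Iio (1/σ))))
      have h4 : ∀ᶠ x in nhdsWithin (1/σ) (Set.Iio (1/σ)), x < 1/σ :=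
        eventually_mem_nhdsWithin
      obtain ⟨x, ⟨hx1, hx0⟩, hx2⟩ := (h3.and h4).exists
      exact ⟨x, hx0, hx2, hx1⟩
    have hσr : σ < 1/r := by
      rw [lt_div_iff₀ hr0]
      rw [lt_div_iff₀ hσ0] at hrσ
      linarith
    set τ := (σ + 1/r)/2 with hτ_def
    have hστ : σ < τ := by rw [hτ_def]; linarith
    have hτ1 : 1 < τ := lt_of_le_of_lt hσ hστ
    have hτr : r * τ < 1 := by
      have hτlt : τ < 1/r := by rw [hτ_def]; linarith
      calc r * τ < r * (1/r) := by exact mul_lt_mul_of_pos_left hτlt hr0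
        _ = 1 := by field_simp
    -- a priori bound for boundedness
    set B := max 1 (⨆ p : Fin μ × Fin μ, ‖G1 p.1 p.2‖) with hB_def
    have hB1 : (1:ℝ) ≤ B := le_max_left _ _
    have hBe : ∀ i j' : Fin μ, ‖G1 i j'‖ ≤ B := by
      intro i j'
      refine le_trans ?_ (le_max_right _ _)
      exact le_ciSup (f := fun p : Fin μ × Fin μ => ‖G1 p.1 p.2‖)
        (Set.Finite.bddAbove (Set.finite_range _)) (i, j')
    have hap := tk_apriori' dd hddnorm μ G1 G hGone hGsucc B hB1 hBe
    have hbddf : Filter.IsBoundedUnder (· ≤ ·) Filter.atTop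
        (fun n : ℕ => nrm n ^ ((n:ℝ)⁻¹)) := by
      refine Filter.isBoundedUnder_of ⟨B, fun n => ?_⟩
      rcases Nat.eq_zero_or_pos n with rfl | hn
      · simp only [Nat.cast_zero, inv_zero, Real.rpow_zero]
        exact hB1
      · have hb : nrm n ≤ B ^ n := ciSup_le fun p => hap n hn p.1 p.2
        calc nrm n ^ ((n:ℝ)⁻¹) ≤ (B^n) ^ ((n:ℝ)⁻¹) :=
              Real.rpow_le_rpow (hnrm0 n) hb (by positivity)
          _ = B := by
            rw [← Real.rpow_natCast B n, ← Real.rpow_mul (le_trans zero_le_one hB1),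
              mul_inv_cancel₀ (Nat.cast_ne_zero.2 (by omega)), Real.rpow_one]
    have hev := Filter.eventually_lt_of_limsup_lt (lt_of_le_of_lt h1 hστ) hbddf
    obtain ⟨N, hN⟩ := Filter.eventually_atTop.1 hev
    have hτn : ∀ n, N ≤ n → 1 ≤ n → nrm n ≤ τ ^ n := by
      intro n h h'
      have hlt := hN n h
      have h0 := hnrm0 n
      calc nrm n = (nrm n ^ ((n:ℝ)⁻¹)) ^ n :=
            (Real.rpow_inv_natCast_pow h0 (by omega)).symm
        _ ≤ τ ^ n := pow_le_pow_left₀ (Real.rpow_nonneg h0 _) hlt.le n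
    have hRne : (Finset.range (N+1)).Nonempty := ⟨0, by simp⟩
    set C := max 1 ((Finset.range (N+1)).sup' hRne (fun n => nrm n / τ ^ n)) with hC_def
    have hC1 : (1:ℝ) ≤ C := le_max_left _ _
    have hCb : ∀ n, nrm n ≤ C * τ ^ n := by
      intro n
      have hτn0 : (0:ℝ) < τ ^ n := by positivity
      rcases le_or_gt n N with h | h
      · have hle : nrm n / τ ^ n ≤ C :=
          le_trans (Finset.le_sup' (fun m => nrm m / τ ^ m) (Finset.mem_range.2 (by omega))) (le_max_right _ _)
        rw [div_le_iff₀ hτn0] at hle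
        exact hle
      · have h1' : 1 ≤ n := by omega
        calc nrm n ≤ τ ^ n := hτn n h.le h1'
          _ ≤ C * τ ^ n := le_mul_of_one_le_left hτn0.le hC1
    -- build the scalar system
    set θ' : ℕ → F := fun i => if h : i < μ then θ ⟨i, h⟩ else 0 with hθ'_def
    set a' : ℕ → ℕ → F := fun n i =>
      if h : i < μ then (if n = 0 then (if i = 0 then 1 else 0) else G n ⟨i, h⟩ ⟨0, hμpos⟩)
      else 0 with ha'_def
    have ha0 : ∀ i, a' 0 i = if i = 0 then 1 else 0 := by
      intro i
      by_cases h : i < μ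
      · simp [ha'_def, h]
      · have hi0 : i ≠ 0 := by omega
        simp [ha'_def, h, hi0]
    have ha'n : ∀ n i (h : i < μ), 1 ≤ n → a' n i = G n ⟨i, h⟩ ⟨0, hμpos⟩ := by
      intro n i h hn
      simp only [ha'_def]
      rw [dif_pos h, if_neg (by omega)]
    have hμ1μ : μ - 1 < μ := by omega
    have hbound : ∀ n i, ‖a' n i‖ ≤ C * τ ^ n := by
      intro n i
      by_cases h : i < μ
      · rcases Nat.eq_zero_or_pos n with rfl | hn
        · rw [ha0 i, pow_zero, mul_one]
          split_ifs
          · simpa using hC1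
          · simp only [norm_zero]
            linarith
        · rw [ha'n n i h hn]
          exact le_trans (hnrm_ge n _ _) (hCb n)
      · have : a' n i = 0 := by simp [ha'_def, h]
        rw [this, norm_zero]
        positivity
    have hshift : ∀ n i, i < μ →
        a' (n+1) i = (if 1 ≤ i then a' n (i-1) else 0) + θ' i * a' n (μ-1) + dd (a' n i) := by
      intro n i hi
      have hθ'i : θ' i = θ ⟨i, hi⟩ := by simp [hθ'_def, hi]
      rcases Nat.eq_zero_or_pos n with rfl | hn
      · -- n = 0
        have hL : a' 1 i = G1 ⟨i, hi⟩ ⟨0, hμpos⟩ := by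
          rw [ha'n 1 i hi le_rfl, hGone]
        have hG1v : G1 ⟨i, hi⟩ ⟨0, hμpos⟩
            = (if (0:ℕ) = μ - 1 then θ ⟨i, hi⟩ else if i = 0 + 1 then 1 else 0) := by
          rw [hG1]
        rw [hL, hG1v, hθ'i]
        simp only [ha0]
        by_cases hμ1 : μ = 1
        · subst hμ1
          have hi0 : i = 0 := by omega
          subst hi0
          norm_num [hdd1]
        · have hμ2 : 2 ≤ μ := by omega
          rw [if_neg (show ¬((0:ℕ) = μ - 1) by omega)]
          have hbz : (if μ - 1 = 0 then (1:F) else 0) = 0 := by rw [if_neg (by omega)]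
          rw [hbz, mul_zero, add_zero]
          have hdz : dd (if i = 0 then (1:F) else 0) = 0 := by
            split_ifs <;> simp [hdd0, hdd1]
          rw [hdz, add_zero]
          by_cases h1i : 1 ≤ i
          · rw [if_pos h1i]
            split_ifs with u v v <;> first | rfl | omega
          · rw [if_neg h1i, if_neg (by omega)]
      · -- n ≥ 1
        have hL : a' (n+1) i = G (n+1) ⟨i, hi⟩ ⟨0, hμpos⟩ := ha'n (n+1) i hi (by omega)
        rw [hL, hGsucc n hn]
        have hentry : (G1 * G n + (G n).map dd) ⟨i, hi⟩ ⟨0, hμpos⟩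
            = (∑ k : Fin μ, G1 ⟨i, hi⟩ k * G n k ⟨0, hμpos⟩) + dd (G n ⟨i, hi⟩ ⟨0, hμpos⟩) := by
          simp [Matrix.add_apply, Matrix.mul_apply, Matrix.map_apply]
        rw [hentry]
        have hsum : (∑ k : Fin μ, G1 ⟨i, hi⟩ k * G n k ⟨0, hμpos⟩)
            = (if 1 ≤ i then a' n (i-1) else 0) + θ' i * a' n (μ-1) := by
          have hsplit : ∀ k : Fin μ, G1 ⟨i, hi⟩ k * G n k ⟨0, hμpos⟩
              = (if k = (⟨μ-1, hμ1μ⟩ : Fin μ) then θ ⟨i, hi⟩ * G n k ⟨0, hμpos⟩ else 0)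
                + (if (i:ℕ) = (k:ℕ) + 1 then G n k ⟨0, hμpos⟩ else 0) := by
            intro k
            have hG1k : G1 ⟨i, hi⟩ k
                = (if (k:ℕ) = μ - 1 then θ ⟨i, hi⟩ else if i = (k:ℕ) + 1 then 1 else 0) := by
              rw [hG1]
            rw [hG1k]
            by_cases h1 : (k:ℕ) = μ - 1
            · have hk2 : k = (⟨μ-1, hμ1μ⟩ : Fin μ) := Fin.ext h1
              rw [if_pos h1, if_pos hk2, if_neg (show ¬(i = (k:ℕ) + 1) by omega), add_zero]
            · have hk2 : ¬(k = (⟨μ-1, hμ1μ⟩ : Fin μ)) := by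
                intro hh
                apply h1
                rw [hh]
              rw [if_neg h1, if_neg hk2, zero_add]
              split_ifs with h2
              · rw [one_mul]
              · rw [zero_mul]
          rw [Finset.sum_congr rfl (fun k _ => hsplit k), Finset.sum_add_distrib]
          have hs1 : (∑ k : Fin μ, if k = (⟨μ-1, hμ1μ⟩ : Fin μ)
              then θ ⟨i, hi⟩ * G n k ⟨0, hμpos⟩ else 0) = θ' i * a' n (μ-1) := by
            rw [Finset.sum_ite_eq' Finset.univ (⟨μ-1, hμ1μ⟩ : Fin μ)
              (fun k => θ ⟨i, hi⟩ * G n k ⟨0, hμpos⟩), if_pos (Finset.mem_univ _)]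
            rw [hθ'i, ha'n n (μ-1) hμ1μ hn]
          have hs2 : (∑ k : Fin μ, if (i:ℕ) = (k:ℕ) + 1 then G n k ⟨0, hμpos⟩ else 0)
              = (if 1 ≤ i then a' n (i-1) else 0) := by
            by_cases h1i : 1 ≤ i
            · have hi1 : i - 1 < μ := by omega
              have hcond : ∀ k : Fin μ, ((i:ℕ) = (k:ℕ) + 1) ↔ (k = ⟨i-1, hi1⟩) := by
                intro k
                constructor
                · intro hh; exact Fin.ext (by simp only [Fin.val_mk]; omega)
                · intro hh; subst hh; simp only [Fin.val_mk]; omega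
              calc (∑ k : Fin μ, if (i:ℕ) = (k:ℕ) + 1 then G n k ⟨0, hμpos⟩ else 0)
                  = (∑ k : Fin μ, if k = (⟨i-1, hi1⟩ : Fin μ) then G n k ⟨0, hμpos⟩ else 0) := by
                    refine Finset.sum_congr rfl (fun k _ => ?_)
                    rw [if_congr (hcond k) rfl rfl]
                _ = G n ⟨i-1, hi1⟩ ⟨0, hμpos⟩ := by
                    rw [Finset.sum_ite_eq' Finset.univ _ (fun k => G n k ⟨0, hμpos⟩),
                      if_pos (Finset.mem_univ _)]
                _ = (if 1 ≤ i then a' n (i-1) else 0) := by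
                    rw [if_pos h1i, ha'n n (i-1) hi1 hn]
            · rw [if_neg h1i]
              refine Finset.sum_eq_zero (fun k _ => ?_)
              rw [if_neg (by omega)]
          rw [hs1, hs2]
          ring
        rw [hsum]
        rw [ha'n n i hi hn]
    have hbig : 1 < ‖θ' (j:ℕ)‖ * r ^ (μ - (j:ℕ)) := by
      have : θ' (j:ℕ) = θ j := by
        simp only [hθ'_def]
        rw [dif_pos j.isLt]
      rw [this]
      exact hrbig
    exact tk_core' dd hddnorm hdd0 hdd1 μ hμ θ' a' ha0 hshift C τ r hC1 hτ1 hr0 hτr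
      hbound (j:ℕ) j.isLt hbig
  tfae_finish
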